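/- Let S be an invertible 2p×2p complex matrix whose entrywise complex conjugate satisfies S* = −S⁻¹, let λ ∈ ℂ with |λ| = 1, let Σ₂ denote the 2p×2p block-diagonal matrix consisting of p copies of σ₂, and suppose T := λ⁻¹(Σ₂ + λ²S*) is invertible. Then S = T*·Σ₂·T⁻¹ (where T* is the entrywise conjugate of T). -/

import Mathlib

open Matrix Complex

noncomputable def sigma2 : Matrix (Fin 2) (Fin 2) ℂ := !![0, -Complex.I; Complex.I, 0]

/-- Σ₂ : block diagonal direct sum of p copies of σ₂. -/
noncomputable def Sigma2p (p : ℕ) : Matrix (Fin 2 × Fin p) (Fin 2 × Fin p) ℂ :=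
  Matrix.blockDiagonal fun _ : Fin p => sigma2

lemma sigma2_sq : sigma2 * sigma2 = 1 := by
  simp [sigma2]
  ext i j
  fin_cases i <;> fin_cases j <;>
    simp [Matrix.mul_apply, Fin.sum_univ_succ, Matrix.one_apply, Complex.I_mul_I]

lemma Sigma2p_sq (p : ℕ) : Sigma2p p * Sigma2p p = 1 := by
  rw [Sigma2p, ← Matrix.blockDiagonal_mul]
  simp [sigma2_sq]; exact Matrix.blockDiagonal_one

lemma Sigma2p_conj (p : ℕ) :
    (Sigma2p p).map (starRingEnd ℂ) = -(Sigma2p p) := by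
  ext ⟨i, k⟩ ⟨j, l⟩
  simp only [Sigma2p, Matrix.map_apply, Matrix.blockDiagonal_apply, Matrix.neg_apply]
  by_cases h : k = l
  · subst h
    simp [sigma2]
    fin_cases i <;> fin_cases j <;> simp
  · simp [h]

/-- if S is invertible with S* = −S⁻¹, |λ| = 1 and
T := λ⁻¹(Σ₂ + λ²S*) is invertible, then S = T* Σ₂ T⁻¹. -/
theorem S_eq_Tstar_Sigma2_Tinv (p : ℕ)
    (S : Matrix (Fin 2 × Fin p) (Fin 2 × Fin p) ℂ)
    (hS : IsUnit S)
    (hSstar : S.map (starRingEnd ℂ) = -S⁻¹)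
    (lam : ℂ) (hlam : ‖lam‖ = 1)
    (T : Matrix (Fin 2 × Fin p) (Fin 2 × Fin p) ℂ)
    (hTdef : T = lam⁻¹ • (Sigma2p p + lam ^ 2 • S.map (starRingEnd ℂ)))
    (hT : IsUnit T) :
    S = T.map (starRingEnd ℂ) * Sigma2p p * T⁻¹ := by
  have hlam0 : lam ≠ 0 := by
    intro h; rw [h] at hlam; simp at hlam
  have hc : (starRingEnd ℂ) lam = lam⁻¹ := by
    field_simp; ring
    rw [mul_comm, Complex.mul_conj]
    norm_cast
    rw [← Complex.sq_norm, hlam]; norm_num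
  have hSdet : IsUnit S.det := (Matrix.isUnit_iff_isUnit_det S).mp hS
  have hTdet : IsUnit T.det := (Matrix.isUnit_iff_isUnit_det T).mp hT
  have hSSstar : S * S.map (starRingEnd ℂ) = -1 := by
    rw [hSstar, Matrix.mul_neg, Matrix.mul_nonsing_inv S hSdet]
  -- conjugate of T
  have hTc : T.map (starRingEnd ℂ) = lam • (-(Sigma2p p) + (lam⁻¹) ^ 2 • S) := by
    have : T.map (starRingEnd ℂ) =
        lam⁻¹⁻¹ • ((Sigma2p p).map (starRingEnd ℂ) + (lam⁻¹) ^ 2 • S) := by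
      rw [hTdef]
      ext i j
      simp [Matrix.map_apply, Matrix.smul_apply, Matrix.add_apply, hc, map_pow,
        Complex.conj_conj, mul_comm, mul_add]
    rw [this, Sigma2p_conj, inv_inv]
  -- key identity
  have key : S * T = T.map (starRingEnd ℂ) * Sigma2p p := by
    rw [hTc, hTdef]
    rw [Matrix.mul_smul, Matrix.smul_mul]
    rw [Matrix.mul_add, Matrix.add_mul]
    rw [Matrix.mul_smul, Matrix.smul_mul, hSSstar, Matrix.neg_mul, Sigma2p_sq]
    rw [smul_add, smul_add, smul_smul, smul_smul]
    have h1 : lam⁻¹ * lam ^ 2 = lam := by field_simp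
    have h2 : lam * lam⁻¹ ^ 2 = lam⁻¹ := by field_simp
    rw [h1, h2]
    abel
  calc S = S * (T * T⁻¹) := by rw [Matrix.mul_nonsing_inv T hTdet, Matrix.mul_one]
    _ = (S * T) * T⁻¹ := by rw [Matrix.mul_assoc]
    _ = T.map (starRingEnd ℂ) * Sigma2p p * T⁻¹ := by rw [key]
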